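/- The function f(y) := (1/y)(ũ(y/κ₁) − ũ(y/κ₂) + y(ε₁−ε₂)) is strictly increasing on (0,∞); indeed f is differentiable on (0,∞) with f′(y) = −(1/y²)(u(I(y/κ₁)) − u(I(y/κ₂))) > 0 for all y>0. -/

import Mathlib

open MeasureTheory

/-- f(y) := (1/y)(ũ(y/κ₁) − ũ(y/κ₂) + y(ε₁−ε₂)) is strictly increasing on (0,∞),
with f′(y) = −(1/y²)(u(I(y/κ₁)) − u(I(y/κ₂))) > 0 for all y > 0. -/
theorem stmt_1
    (u u' I utld : ℝ → ℝ)
    (hu_mono : StrictMonoOn u (Set.Ici 0))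
    (hu_conc : StrictConcaveOn ℝ (Set.Ici 0) u)
    (hu_cont : ContinuousOn u (Set.Ici 0))
    (hu_deriv : ∀ c : ℝ, 0 < c → HasDerivAt u (u' c) c)
    (hu'_cont : ContinuousOn u' (Set.Ioi 0))
    (hu'_top : Filter.Tendsto u' Filter.atTop (nhds 0))
    (hu'_zero : Filter.Tendsto u' (nhdsWithin 0 (Set.Ioi 0)) Filter.atTop)
    (hI_pos : ∀ y : ℝ, 0 < y → 0 < I y)
    (hI_left : ∀ y : ℝ, 0 < y → u' (I y) = y)
    (hI_right : ∀ c : ℝ, 0 < c → I (u' c) = c)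
    (hI_anti : StrictAntiOn I (Set.Ioi 0))
    (hI_cont : ContinuousOn I (Set.Ioi 0))
    (hI_zero : Filter.Tendsto I (nhdsWithin 0 (Set.Ioi 0)) Filter.atTop)
    (hI_top : Filter.Tendsto I Filter.atTop (nhds 0))
    (hutld : ∀ y : ℝ, 0 < y → utld y = u (I y) - y * I y)
    (ε₁ ε₂ κ₁ κ₂ : ℝ)
    (hε₂ : 0 < ε₂) (hε₁₂ : ε₂ < ε₁)
    (hκ₁ : 0 < κ₁) (hκ₁₂ : κ₁ < κ₂) (hκ₂ : κ₂ < 1)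
    :
    StrictMonoOn (fun y : ℝ => (1 / y) * (utld (y / κ₁) - utld (y / κ₂) + y * (ε₁ - ε₂)))
      (Set.Ioi 0) ∧
    ∀ y : ℝ, 0 < y →
      HasDerivAt (fun y : ℝ => (1 / y) * (utld (y / κ₁) - utld (y / κ₂) + y * (ε₁ - ε₂)))
        (-(1 / y ^ 2) * (u (I (y / κ₁)) - u (I (y / κ₂)))) y ∧
      0 < -(1 / y ^ 2) * (u (I (y / κ₁)) - u (I (y / κ₂))) := by
  have hconc := hu_conc.concaveOn
  -- gradient inequality for concave u
  have grad : ∀ a b : ℝ, 0 < a → 0 < b → u a - u b ≤ u' b * (a - b) := by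
    intro a b ha hb
    rcases lt_trichotomy a b with h | h | h
    · have hs := hconc.le_slope_of_hasDerivAt (le_of_lt ha) (le_of_lt hb) h (hu_deriv b hb)
      rw [slope_def_field] at hs
      have h3 : u' b * (b - a) ≤ u b - u a := (le_div_iff₀ (sub_pos.mpr h)).mp hs
      nlinarith
    · subst h; simp
    · have hs := hconc.slope_le_of_hasDerivAt (le_of_lt hb) (le_of_lt ha) h (hu_deriv b hb)
      rw [slope_def_field] at hs
      have h3 : u a - u b ≤ u' b * (a - b) := (div_le_iff₀ (sub_pos.mpr h)).mp hs
      exact h3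
  -- two-sided bounds on increments of utld
  have key₁ : ∀ y z : ℝ, 0 < y → 0 < z → utld z - utld y ≤ -(z - y) * I z := by
    intro y z hy hz
    have g := grad (I z) (I y) (hI_pos _ hz) (hI_pos _ hy)
    rw [hI_left y hy] at g
    rw [hutld z hz, hutld y hy]
    nlinarith
  have key₂ : ∀ y z : ℝ, 0 < y → 0 < z → -(z - y) * I y ≤ utld z - utld y := by
    intro y z hy hz
    have g := grad (I y) (I z) (hI_pos _ hy) (hI_pos _ hz)
    rw [hI_left z hz] at g
    rw [hutld z hz, hutld y hy]
    nlinarith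
  -- utld is differentiable with derivative -I
  have hD : ∀ y : ℝ, 0 < y → HasDerivAt utld (-(I y)) y := by
    intro y hy
    rw [hasDerivAt_iff_tendsto_slope, tendsto_iff_dist_tendsto_zero]
    have hcI : ContinuousAt I y := hI_cont.continuousAt (Ioi_mem_nhds hy)
    have hItend : Filter.Tendsto (fun z : ℝ => |I z - I y|) (nhdsWithin y {y}ᶜ) (nhds 0) := by
      have : Filter.Tendsto (fun z : ℝ => |I z - I y|) (nhds y) (nhds (|I y - I y|)) :=
        ((hcI.tendsto.sub tendsto_const_nhds).abs)
      simpa using this.mono_left nhdsWithin_le_nhds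
    refine squeeze_zero' (Filter.Eventually.of_forall fun _ => dist_nonneg) ?_ hItend
    have hpos : ∀ᶠ z : ℝ in nhdsWithin y {y}ᶜ, 0 < z :=
      (eventually_gt_nhds hy).filter_mono nhdsWithin_le_nhds
    filter_upwards [hpos, self_mem_nhdsWithin] with z hz hne
    have hne' : z ≠ y := hne
    have hzy : z - y ≠ 0 := sub_ne_zero.mpr hne'
    have hN1 : 0 ≤ utld z - utld y + (z - y) * I y := by
      have := key₂ y z hy hz; nlinarith
    have hN2 : utld z - utld y + (z - y) * I y ≤ (z - y) * (I y - I z) := by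
      have := key₁ y z hy hz; nlinarith
    have heq : dist (slope utld y z) (-(I y))
        = |(utld z - utld y + (z - y) * I y) / (z - y)| := by
      rw [Real.dist_eq, slope_def_field]
      congr 1
      field_simp
      ring
    rw [heq, abs_div]
    rw [div_le_iff₀ (abs_pos.mpr hzy)]
    calc |utld z - utld y + (z - y) * I y| = utld z - utld y + (z - y) * I y :=
          abs_of_nonneg hN1
      _ ≤ (z - y) * (I y - I z) := hN2
      _ ≤ |(z - y) * (I y - I z)| := le_abs_self _
      _ = |I z - I y| * |z - y| := by rw [abs_mul, abs_sub_comm (I y)]; ring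
  -- derivative of f at each point, and positivity
  have hder : ∀ y : ℝ, 0 < y →
      HasDerivAt (fun y : ℝ => (1 / y) * (utld (y / κ₁) - utld (y / κ₂) + y * (ε₁ - ε₂)))
        (-(1 / y ^ 2) * (u (I (y / κ₁)) - u (I (y / κ₂)))) y ∧
      0 < -(1 / y ^ 2) * (u (I (y / κ₁)) - u (I (y / κ₂))) := by
    intro y hy
    have hκ₁' : (0:ℝ) < κ₁ := hκ₁
    have hκ₂' : (0:ℝ) < κ₂ := lt_trans hκ₁ hκ₁₂
    have hy₁ : 0 < y / κ₁ := div_pos hy hκ₁'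
    have hy₂ : 0 < y / κ₂ := div_pos hy hκ₂'
    have hA : HasDerivAt (fun t : ℝ => utld (t / κ₁)) (-(I (y / κ₁)) * (1 / κ₁)) y := by
      exact (hD _ hy₁).comp y ((hasDerivAt_id' y).div_const κ₁)
    have hB : HasDerivAt (fun t : ℝ => utld (t / κ₂)) (-(I (y / κ₂)) * (1 / κ₂)) y := by
      exact (hD _ hy₂).comp y ((hasDerivAt_id' y).div_const κ₂)
    have hC : HasDerivAt (fun t : ℝ => t * (ε₁ - ε₂)) (1 * (ε₁ - ε₂)) y :=
      (hasDerivAt_id y).mul_const _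
    have hsum := (hA.sub hB).add hC
    have hinv : HasDerivAt (fun t : ℝ => 1 / t) (-(1 / y ^ 2)) y := by
      simpa [one_div] using hasDerivAt_inv (ne_of_gt hy)
    have hmul := hinv.mul hsum
    constructor
    · refine hmul.congr_deriv ?_
      simp only [Pi.add_apply, Pi.sub_apply]
      rw [hutld _ hy₁, hutld _ hy₂]
      have hyne : y ≠ 0 := ne_of_gt hy
      have h₁ne : κ₁ ≠ 0 := ne_of_gt hκ₁'
      have h₂ne : κ₂ ≠ 0 := ne_of_gt hκ₂'
      field_simp
      ring
    · have hlt : y / κ₂ < y / κ₁ := by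
        rw [div_lt_div_iff₀ hκ₂' hκ₁']
        nlinarith
      have hIlt : I (y / κ₁) < I (y / κ₂) := hI_anti hy₂ hy₁ hlt
      have hIp₁ := hI_pos _ hy₁
      have hIp₂ := hI_pos _ hy₂
      have hult : u (I (y / κ₁)) < u (I (y / κ₂)) :=
        hu_mono (le_of_lt hIp₁) (le_of_lt hIp₂) hIlt
      have h2pos : (0:ℝ) < 1 / y ^ 2 := by positivity
      have : -(1 / y ^ 2) < 0 := by linarith
      exact mul_pos_of_neg_of_neg this (by linarith)
  refine ⟨?_, hder⟩
  -- strict monotonicity from positive derivative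
  apply strictMonoOn_of_deriv_pos (convex_Ioi (0:ℝ))
  · intro x hx
    exact ((hder x hx).1.continuousAt).continuousWithinAt
  · intro x hx
    rw [interior_Ioi] at hx
    rw [(hder x hx).1.deriv]
    exact (hder x hx).2
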